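/- Let α ∈ (0,1) and M_A ≤ n < M_{A+1} with digits n = Σ_{k=0}^A n_k M_k and partial values n^{(k)} = n_k M_k + ⋯ + n_0 M_0, n^{(−1)} = 0. Then Σ_{j=1}^{n} A_{n−j}^{−α−1} D_j(x) = Σ_{k=0}^{A} (∏_{l=k+1}^{A} ψ_{n_l M_l}(x)) D_{n_k M_k}(x) A_{n^{(k)}−1}^{−α} − Σ_{k=0}^{A} (∏_{l=k+1}^{A} ψ_{n_l M_l}(x)) ψ_{n_k M_k −1}(x) Σ_{j=0}^{n_k M_k −1} A_{n^{(k−1)}+j}^{−α−1} conj(D_j(x)). -/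

import Mathlib

open scoped BigOperators
open Complex MeasureTheory

noncomputable section
namespace Vilenkin

/-- The generalized powers `M 0 = 1`, `M (k+1) = m k * M k`. -/
def M (m : ℕ → ℕ) : ℕ → ℕ
  | 0 => 1
  | k + 1 => m k * M m k

/-- The Vilenkin group: complete direct product of the cyclic groups `ZMod (m k)`. -/
abbrev G (m : ℕ → ℕ) := ∀ k, ZMod (m k)

instance (n : ℕ) : MeasurableSpace (ZMod n) := ⊤
instance (n : ℕ) : TopologicalSpace (ZMod n) := ⊥

/-- `k`-th digit of `n` in the generalized number system based on `m`. -/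
def dig (m : ℕ → ℕ) (n k : ℕ) : ℕ := (n / M m k) % m k

/-- The generalized Rademacher functions. -/
def rad (m : ℕ → ℕ) (k : ℕ) (x : G m) : ℂ :=
  Complex.exp (2 * Real.pi * Complex.I * ((x k).val : ℝ) / (m k : ℝ))

/-- The Vilenkin functions. -/
def psi (m : ℕ → ℕ) (n : ℕ) (x : G m) : ℂ :=
  ∏ k ∈ Finset.range (n + 1), rad m k x ^ dig m n k

/-- The Dirichlet kernels. -/
def D (m : ℕ → ℕ) (n : ℕ) (x : G m) : ℂ := ∑ j ∈ Finset.range n, psi m j x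

/-- The basic neighbourhood `I_k = {y : y_0 = ⋯ = y_{k-1} = 0}`. -/
def Icyl (m : ℕ → ℕ) (k : ℕ) : Set (G m) := {y | ∀ j < k, y j = 0}

/-- The coset representative `Z_β^{(k)}`, supported on coordinates `< k`,
with `β = ∑_{j<k} x_j · (M_k / M_{j+1})`. -/
def Z (m : ℕ → ℕ) (k β : ℕ) : G m :=
  fun j => if j < k then ((β / (M m k / M m (j + 1))) % m j : ℕ) else 0

/-- The `k`-th coordinate unit vector `e_k`. -/
def e (m : ℕ → ℕ) (k : ℕ) : G m := fun j => if j = k then 1 else 0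

/-- Cesàro numbers `A_0^α = 1`, `A_n^α = (α+1)⋯(α+n)/n!`. -/
def A (α : ℝ) (n : ℕ) : ℝ := ∏ j ∈ Finset.range n, (α + j + 1) / (j + 1)

/-- Partial value `n^{(k-1)} = ∑_{j<k} n_j M_j` of the expansion of `n`. -/
def npart (m : ℕ → ℕ) (n k : ℕ) : ℕ := ∑ j ∈ Finset.range k, dig m n j * M m j

/-- `μ` is the (normalized Haar) probability measure on `G m` iff it gives each
cylinder of depth `k` measure `1 / M_k`. -/
def IsHaar (m : ℕ → ℕ) (μ : Measure (G m)) : Prop :=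
  IsProbabilityMeasure μ ∧
    ∀ (k : ℕ) (z : G m), μ {y | ∀ j < k, y j = z j} = 1 / (M m k : ENNReal)

/-- The `(C,a)` Cesàro kernel `K_n^{a}`. -/
def K (m : ℕ → ℕ) (a : ℝ) (n : ℕ) (x : G m) : ℂ :=
  (A a (n - 1) : ℂ)⁻¹ * ∑ ν ∈ Finset.range n, (A a (n - 1 - ν) : ℝ) * psi m ν x

/-- Vilenkin-Fourier coefficients. -/
def fhat (m : ℕ → ℕ) (μ : Measure (G m)) (f : G m → ℂ) (k : ℕ) : ℂ :=
  ∫ t, f t * (starRingEnd ℂ) (psi m k t) ∂μ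

/-- Partial sums of the Vilenkin-Fourier series. -/
def S (m : ℕ → ℕ) (μ : Measure (G m)) (f : G m → ℂ) (n : ℕ) (x : G m) : ℂ :=
  ∑ k ∈ Finset.range n, fhat m μ f k * psi m k x

/-- The `(C, a)` Cesàro means of the Vilenkin-Fourier series,
`σ_n^{a} f = (1/A_{n-1}^{a}) ∑_{ν=0}^{n} A_{n-ν}^{a-1} S_ν f`. -/
def ces (m : ℕ → ℕ) (μ : Measure (G m)) (a : ℝ) (n : ℕ) (f : G m → ℂ) (x : G m) : ℂ :=
  (A a (n - 1) : ℂ)⁻¹ * ∑ ν ∈ Finset.range (n + 1), (A (a - 1) (n - ν) : ℝ) * S m μ f ν x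

/-- Oscillation of `f` on the set `E`. -/
def osc {m : ℕ → ℕ} (f : G m → ℂ) (E : Set (G m)) : ℝ :=
  ⨆ p : E × E, ‖f p.1 - f p.2‖

/-- `ν(M_k, f) = ∑_{β=0}^{M_k-1} ω(f, I_k + Z_β^{(k)})`. -/
def nu (m : ℕ → ℕ) (f : G m → ℂ) (k : ℕ) : ℝ :=
  ∑ β ∈ Finset.range (M m k), osc f ((Z m k β + ·) '' Icyl m k)


section AuxLemmas

variable {m : ℕ → ℕ}

lemma M_pos (hm : ∀ k, 2 ≤ m k) : ∀ k, 0 < M m k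
  | 0 => Nat.one_pos
  | (k + 1) => Nat.mul_pos (by have := hm k; omega) (M_pos hm k)

lemma M_dvd {j k : ℕ} (h : j ≤ k) : M m j ∣ M m k := by
  induction h with
  | refl => exact dvd_rfl
  | step h ih => exact ih.trans (dvd_mul_left _ _)

lemma M_le (hm : ∀ k, 2 ≤ m k) {j k : ℕ} (h : j ≤ k) : M m j ≤ M m k :=
  Nat.le_of_dvd (M_pos hm k) (M_dvd h)

lemma lt_M (hm : ∀ k, 2 ≤ m k) (n : ℕ) : n < M m (n + 1) := by
  have h : ∀ k, 2 ^ k ≤ M m k := by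
    intro k; induction k with
    | zero => simp [M]
    | succ k ih =>
      calc 2 ^ (k + 1) = 2 * 2 ^ k := by ring
      _ ≤ m k * M m k := Nat.mul_le_mul (hm k) ih
      _ = M m (k + 1) := rfl
  calc n < 2 ^ n := Nat.lt_two_pow_self
  _ ≤ 2 ^ (n + 1) := Nat.pow_le_pow_right (by norm_num) (Nat.le_succ n)
  _ ≤ M m (n + 1) := h (n + 1)

lemma dig_eq_zero {n k : ℕ} (h : n < M m k) : dig m n k = 0 := by
  simp [dig, Nat.div_eq_of_lt h]

lemma dig_low (hm : ∀ k, 2 ≤ m k) {j k : ℕ} (hjk : j < k) (a i : ℕ) :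
    dig m (a * M m k + i) j = dig m i j := by
  obtain ⟨c, hc⟩ := M_dvd (show j + 1 ≤ k from hjk)
  have hMj : 0 < M m j := M_pos hm j
  have hrw : a * M m k = a * c * m j * M m j := by
    rw [hc, show M m (j + 1) = m j * M m j from rfl]; ring
  have h1 : (a * M m k + i) / M m j = a * c * m j + i / M m j := by
    rw [hrw, mul_comm _ (M m j), Nat.mul_add_div hMj]
  show (a * M m k + i) / M m j % m j = i / M m j % m j
  rw [h1, add_comm, Nat.add_mul_mod_self_right]

lemma dig_high (hm : ∀ k, 2 ≤ m k) {k j i : ℕ} (hkj : k ≤ j) (hi : i < M m k) (a : ℕ) :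
    dig m (a * M m k + i) j = dig m (a * M m k) j := by
  obtain ⟨c, hc⟩ := M_dvd hkj
  have hMk : 0 < M m k := M_pos hm k
  have h0 : (a * M m k + i) / M m k = a := by
    rw [mul_comm, Nat.mul_add_div hMk, Nat.div_eq_of_lt hi, add_zero]
  have h1 : (a * M m k + i) / M m j = a / c := by
    rw [hc, ← Nat.div_div_eq_div_mul, h0]
  have h2 : a * M m k / M m j = a / c := by
    rw [hc, ← Nat.div_div_eq_div_mul, Nat.mul_div_cancel a hMk]
  show _ % m j = _ % m j
  rw [h1, h2]

lemma dig_mul_zero (hm : ∀ k, 2 ≤ m k) {j k : ℕ} (hjk : j < k) (a : ℕ) :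
    dig m (a * M m k) j = 0 := by
  have h := dig_low hm hjk a 0
  rw [add_zero] at h
  rw [h]
  simp [dig]

lemma dig_add (hm : ∀ k, 2 ≤ m k) {k i : ℕ} (hi : i < M m k) (a j : ℕ) :
    dig m (a * M m k + i) j = dig m (a * M m k) j + dig m i j := by
  rcases lt_or_ge j k with h | h
  · rw [dig_low hm h a i, dig_mul_zero hm h a, zero_add]
  · rw [dig_high hm h hi a, dig_eq_zero (lt_of_lt_of_le hi (M_le hm h)), add_zero]

lemma npart_eq_mod (hm : ∀ k, 2 ≤ m k) (n : ℕ) : ∀ k, npart m n k = n % M m k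
  | 0 => by simp [npart, M, Nat.mod_one]
  | (k + 1) => by
    have ih := npart_eq_mod hm n k
    have hMk := M_pos hm k
    rw [npart, Finset.sum_range_succ, ← npart, ih]
    have h1 : n % M m (k + 1) % M m k = n % M m k := Nat.mod_mod_of_dvd n (M_dvd (Nat.le_succ k))
    have h2 : n % M m (k + 1) / M m k = n / M m k % m k := by
      rw [show M m (k + 1) = m k * M m k from rfl, mul_comm]
      exact Nat.mod_mul_right_div_self n (M m k) (m k)
    have h3 := Nat.mod_add_div (n % M m (k + 1)) (M m k)
    rw [h1, h2] at h3
    rw [dig, mul_comm]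
    exact h3

end AuxLemmas
section PsiLemmas

variable {m : ℕ → ℕ}

lemma psi_eq_prod (hm : ∀ k, 2 ≤ m k) {n t : ℕ} (ht : n < M m t) (x : G m) :
    psi m n x = ∏ k ∈ Finset.range t, rad m k x ^ dig m n k := by
  rw [psi]
  rcases le_total (n + 1) t with h | h
  · apply Finset.prod_subset (Finset.range_subset_range.2 h)
    intro k hk hk'
    have hk1 : n + 1 ≤ k := by
      simp only [Finset.mem_range, not_lt] at hk'
      exact hk'
    have hnk : n < M m k := lt_of_lt_of_le (lt_M hm n) (M_le hm hk1)
    rw [dig_eq_zero hnk, pow_zero]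
  · symm
    apply Finset.prod_subset (Finset.range_subset_range.2 h)
    intro k hk hk'
    have hk1 : t ≤ k := by
      simp only [Finset.mem_range, not_lt] at hk'
      exact hk'
    have hnk : n < M m k := lt_of_lt_of_le ht (M_le hm hk1)
    rw [dig_eq_zero hnk, pow_zero]

lemma psi_add (hm : ∀ k, 2 ≤ m k) {u v : ℕ}
    (h : ∀ j, dig m (u + v) j = dig m u j + dig m v j) (x : G m) :
    psi m (u + v) x = psi m u x * psi m v x := by
  have huv : u + v < M m (u + v + 1) := lt_M hm (u + v)
  have hu : u < M m (u + v + 1) := lt_of_le_of_lt (Nat.le_add_right u v) huv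
  have hv : v < M m (u + v + 1) := lt_of_le_of_lt (Nat.le_add_left v u) huv
  rw [psi_eq_prod hm huv x, psi_eq_prod hm hu x, psi_eq_prod hm hv x,
    ← Finset.prod_mul_distrib]
  exact Finset.prod_congr rfl fun k _ => by rw [h k, pow_add]

lemma psi_zero (x : G m) : psi m 0 x = 1 := by
  simp [psi, dig]

lemma psi_mul (hm : ∀ k, 2 ≤ m k) {k i : ℕ} (hi : i < M m k) (a : ℕ) (x : G m) :
    psi m (a * M m k + i) x = psi m (a * M m k) x * psi m i x :=
  psi_add hm (dig_add hm hi a) x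

lemma abs_psi (n : ℕ) (x : G m) : ‖psi m n x‖ = 1 := by
  rw [psi, norm_prod]
  refine Finset.prod_eq_one fun k _ => ?_
  rw [norm_pow]
  suffices h : ‖rad m k x‖ = 1 by rw [h, one_pow]
  have hr : rad m k x = Complex.exp ((2 * Real.pi * ((x k).val : ℝ) / (m k) : ℝ) * Complex.I) := by
    rw [rad]
    congr 1
    push_cast
    ring
  rw [hr, Complex.norm_exp_ofReal_mul_I]

lemma conj_psi_mul (n : ℕ) (x : G m) :
    (starRingEnd ℂ) (psi m n x) * psi m n x = 1 := by
  have h1 : Complex.normSq (psi m n x) = 1 := by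
    rw [← Complex.sq_norm, abs_psi n x, one_pow]
  rw [mul_comm, Complex.mul_conj, h1, Complex.ofReal_one]

end PsiLemmas
section ReflectLemmas

variable {m : ℕ → ℕ}

lemma pred_decomp {P N : ℕ} (hP : 0 < P) (hN : 1 ≤ N) :
    P * N - 1 = P * (N - 1) + (P - 1) := by
  cases N with
  | zero => omega
  | succ n =>
    have h : P * (n + 1) = P * n + P := by ring
    simp only [Nat.add_sub_cancel]
    omega

lemma pred_mod {P N : ℕ} (hP : 0 < P) (hN : 1 ≤ N) : (P * N - 1) % P = P - 1 := by
  rw [pred_decomp hP hN, Nat.mul_add_mod, Nat.mod_eq_of_lt (by omega)]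

lemma pred_div {P N : ℕ} (hP : 0 < P) (hN : 1 ≤ N) : (P * N - 1) / P = N - 1 := by
  rw [pred_decomp hP hN, Nat.mul_add_div hP, Nat.div_eq_of_lt (by omega), add_zero]

lemma mod_add_mod_eq {mm a b : ℕ} (h0 : 0 < mm) (h : (a + b) % mm = mm - 1) :
    a % mm + b % mm = mm - 1 := by
  have h1 : a % mm < mm := Nat.mod_lt _ h0
  have h2 : b % mm < mm := Nat.mod_lt _ h0
  have h3 : (a % mm + b % mm) % mm = mm - 1 := by rw [← Nat.add_mod]; exact h
  rcases lt_or_ge (a % mm + b % mm) mm with h4 | h4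
  · rwa [Nat.mod_eq_of_lt h4] at h3
  · rw [Nat.mod_eq_sub_mod h4, Nat.mod_eq_of_lt (by omega)] at h3
    omega

lemma dig_reflect (hm : ∀ k, 2 ≤ m k) {A' q v : ℕ} (hq1 : 1 ≤ q) (hq : q ≤ m A')
    (hv : v < q * M m A') (l : ℕ) :
    dig m v l + dig m (q * M m A' - 1 - v) l = dig m (q * M m A' - 1) l := by
  set Q := q * M m A' with hQdef
  set w := Q - 1 - v with hwdef
  have hMA : 0 < M m A' := M_pos hm A'
  have hQpos : 0 < Q := Nat.mul_pos hq1 hMA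
  have hvw : v + w = Q - 1 := by omega
  rcases lt_or_ge A' l with hAl | hlA
  · -- l > A' : all digits vanish
    have h1 : Q ≤ M m (A' + 1) := by
      have h0 : M m (A' + 1) = m A' * M m A' := rfl
      rw [hQdef, h0]
      exact Nat.mul_le_mul_right _ hq
    have h2 : M m (A' + 1) ≤ M m l := M_le hm hAl
    rw [dig_eq_zero (by omega : v < M m l), dig_eq_zero (by omega : w < M m l),
      dig_eq_zero (by omega : Q - 1 < M m l)]
  · -- l ≤ A'
    obtain ⟨c, hc⟩ := M_dvd hlA
    set P := M m l with hPdef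
    have hPpos : 0 < P := M_pos hm l
    have hcpos : 0 < c := by
      rcases Nat.eq_zero_or_pos c with h | h
      · rw [h, mul_zero] at hc; omega
      · exact h
    have hQP : Q = P * (q * c) := by rw [hQdef, hc]; ring
    have hqc1 : 0 < q * c := Nat.mul_pos hq1 hcpos
    have hmod : (Q - 1) % P = P - 1 := by rw [hQP]; exact pred_mod hPpos hqc1
    have hdiv : (Q - 1) / P = q * c - 1 := by rw [hQP]; exact pred_div hPpos hqc1
    have hmodsum : v % P + w % P = P - 1 := by
      apply mod_add_mod_eq hPpos
      rw [hvw]; exact hmod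
    have hdivsum : v / P + w / P = q * c - 1 := by
      have h1 := Nat.mod_add_div v P
      have h2 := Nat.mod_add_div w P
      have h3 := Nat.mod_add_div (Q - 1) P
      have h4 : P * (v / P) + P * (w / P) = P * ((Q - 1) / P) := by omega
      have h5 : P * (v / P + w / P) = P * ((Q - 1) / P) := by rw [Nat.mul_add]; exact h4
      have h6 := Nat.eq_of_mul_eq_mul_left hPpos h5
      rw [hdiv] at h6; exact h6
    show v / P % m l + w / P % m l = (Q - 1) / P % m l
    rw [hdiv]
    rcases eq_or_lt_of_le hlA with hEq | hlt
    · -- l = A' : c = 1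
      have hc1 : c = 1 := by
        have h7 : M m l * c = M m l * 1 := by rw [mul_one, ← hc, hEq]
        exact Nat.eq_of_mul_eq_mul_left hPpos h7
      rw [hc1, mul_one] at hdivsum
      have hq' : q - 1 < m l := by rw [hEq]; omega
      have hv' : v / P < m l := lt_of_le_of_lt (Nat.le.intro hdivsum) hq'
      have hw' : w / P < m l :=
        lt_of_le_of_lt (Nat.le.intro (by rw [add_comm]; exact hdivsum)) hq'
      rw [hc1, mul_one, Nat.mod_eq_of_lt hv', Nat.mod_eq_of_lt hw', Nat.mod_eq_of_lt hq']
      exact hdivsum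
    · -- l < A' : m l ∣ c
      obtain ⟨d, hd⟩ := M_dvd (show l + 1 ≤ A' from hlt)
      have hcd : c = m l * d := by
        have h7 : M m l * c = M m l * (m l * d) := by
          rw [← hc, hd, show M m (l + 1) = m l * M m l from rfl]; ring
        exact Nat.eq_of_mul_eq_mul_left hPpos h7
      have hdpos : 0 < d := by
        rcases Nat.eq_zero_or_pos d with h | h
        · rw [h, mul_zero] at hcd; omega
        · exact h
      have hml : 0 < m l := by have := hm l; omega
      have hqd1 : 0 < q * d := Nat.mul_pos hq1 hdpos
      have hqc : q * c = m l * (q * d) := by rw [hcd]; ring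
      have htop : (q * c - 1) % m l = m l - 1 := by rw [hqc]; exact pred_mod hml hqd1
      rw [htop]
      apply mod_add_mod_eq hml
      rw [hdivsum, htop]

lemma psi_reflect (hm : ∀ k, 2 ≤ m k) {A' q v : ℕ} (hq1 : 1 ≤ q) (hq : q ≤ m A')
    (hv : v < q * M m A') (x : G m) :
    psi m (q * M m A' - 1 - v) x = psi m (q * M m A' - 1) x * (starRingEnd ℂ) (psi m v x) := by
  have hMA : 0 < M m A' := M_pos hm A'
  have hQpos : 0 < q * M m A' := Nat.mul_pos hq1 hMA
  have hvw : v + (q * M m A' - 1 - v) = q * M m A' - 1 := by omega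
  have h1 : psi m (q * M m A' - 1) x = psi m v x * psi m (q * M m A' - 1 - v) x := by
    conv_lhs => rw [← hvw]
    exact psi_add hm (fun j => by rw [hvw]; exact (dig_reflect hm hq1 hq hv j).symm) x
  have h2 := conj_psi_mul (m := m) v x
  calc psi m (q * M m A' - 1 - v) x
      = ((starRingEnd ℂ) (psi m v x) * psi m v x) * psi m (q * M m A' - 1 - v) x := by
        rw [h2, one_mul]
    _ = (starRingEnd ℂ) (psi m v x) * (psi m v x * psi m (q * M m A' - 1 - v) x) := by ring
    _ = psi m (q * M m A' - 1) x * (starRingEnd ℂ) (psi m v x) := by rw [← h1]; ring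

lemma D_zero (x : G m) : D m 0 x = 0 := by
  rw [D]
  exact Finset.sum_range_zero _

lemma D_add (hm : ∀ k, 2 ≤ m k) {k i : ℕ} (hi : i < M m k) (a : ℕ) (x : G m) :
    D m (a * M m k + i) x = D m (a * M m k) x + psi m (a * M m k) x * D m i x := by
  have h2 : ∑ j ∈ Finset.Ico (a * M m k) (a * M m k + i), psi m j x
      = psi m (a * M m k) x * D m i x := by
    rw [Finset.sum_Ico_eq_sum_range]
    have he : a * M m k + i - a * M m k = i := by omega
    rw [he, D, Finset.mul_sum]
    exact Finset.sum_congr rfl fun u hu =>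
      psi_mul hm (lt_trans (Finset.mem_range.1 hu) hi) a x
  rw [D, Finset.range_eq_Ico,
    ← Finset.sum_Ico_consecutive (fun j => psi m j x) (Nat.zero_le (a * M m k))
      (Nat.le_add_right _ i), h2]
  congr 1
  rw [D, Finset.range_eq_Ico]

lemma D_reflect (hm : ∀ k, 2 ≤ m k) {A' q i : ℕ} (hq1 : 1 ≤ q) (hq : q ≤ m A')
    (hi : i ≤ q * M m A') (x : G m) :
    D m (q * M m A' - i) x =
      D m (q * M m A') x - psi m (q * M m A' - 1) x * (starRingEnd ℂ) (D m i x) := by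
  set Q := q * M m A' with hQdef
  have hEq : D m Q x - D m (Q - i) x = ∑ j ∈ Finset.Ico (Q - i) Q, psi m j x := by
    rw [D, D, Finset.range_eq_Ico,
      ← Finset.sum_Ico_consecutive (fun j => psi m j x) (Nat.zero_le (Q - i)) (Nat.sub_le Q i)]
    rw [← Finset.range_eq_Ico]
    ring
  have h2 : ∑ j ∈ Finset.Ico (Q - i) Q, psi m j x
      = psi m (Q - 1) x * (starRingEnd ℂ) (D m i x) := by
    rw [Finset.sum_Ico_eq_sum_range]
    have hQi : Q - (Q - i) = i := by omega
    rw [hQi, ← Finset.sum_range_reflect (fun u => psi m (Q - i + u) x) i]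
    rw [D, map_sum, Finset.mul_sum]
    refine Finset.sum_congr rfl fun u hu => ?_
    have hu' : u < i := Finset.mem_range.1 hu
    have he : Q - i + (i - 1 - u) = Q - 1 - u := by omega
    rw [he, psi_reflect hm hq1 hq (by omega : u < Q) x]
  rw [h2] at hEq
  linear_combination -hEq

end ReflectLemmas
section CesaroLemmas

lemma A_succ (β : ℝ) (t : ℕ) : A β (t + 1) = A β t * ((β + t + 1) / (t + 1)) :=
  Finset.prod_range_succ _ _

lemma A_ratio (α : ℝ) : ∀ t : ℕ, ((t : ℝ) - α) * A (-α - 1) t = (-α) * A (-α) t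
  | 0 => by simp [A]
  | (t + 1) => by
    have ih := A_ratio α t
    have ht1 : ((t : ℝ) + 1) ≠ 0 := by positivity
    rw [A_succ, A_succ]
    push_cast
    linear_combination (((t : ℝ) + 1 - α) / ((t : ℝ) + 1)) * ih

lemma A_step (α : ℝ) (t : ℕ) : A (-α) (t + 1) = A (-α) t + A (-α - 1) (t + 1) := by
  have h := A_ratio α t
  have ht1 : ((t : ℝ) + 1) ≠ 0 := by positivity
  rw [A_succ, A_succ]
  field_simp
  linear_combination -h

lemma A_sum (α : ℝ) : ∀ t : ℕ, ∑ i ∈ Finset.range (t + 1), A (-α - 1) i = A (-α) t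
  | 0 => by simp [A]
  | (t + 1) => by
    rw [Finset.sum_range_succ, A_sum α t, ← A_step]

end CesaroLemmas
section CoreLemma

variable {m : ℕ → ℕ}

lemma core (hm : ∀ k, 2 ≤ m k) (α : ℝ) {A' q r : ℕ} (hq : q ≤ m A') (hr : r < M m A')
    (x : G m) :
    ∑ j ∈ Finset.Icc 1 (q * M m A' + r), ((A (-α - 1) (q * M m A' + r - j) : ℝ) : ℂ) * D m j x =
      D m (q * M m A') x * ((A (-α) (q * M m A' + r - 1) : ℝ) : ℂ)
        - psi m (q * M m A' - 1) x *
            ∑ j ∈ Finset.range (q * M m A'),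
              ((A (-α - 1) (r + j) : ℝ) : ℂ) * (starRingEnd ℂ) (D m j x)
        + psi m (q * M m A') x *
            ∑ j ∈ Finset.Icc 1 r, ((A (-α - 1) (r - j) : ℝ) : ℂ) * D m j x := by
  rcases Nat.eq_zero_or_pos q with hq0 | hq1
  · subst hq0
    simp [D_zero, psi_zero]
  · have hMA : 0 < M m A' := M_pos hm A'
    have hQ1 : 1 ≤ q * M m A' := Nat.mul_pos hq1 hMA
    have hsplit :
        ∑ j ∈ Finset.Icc 1 (q * M m A' + r),
            ((A (-α - 1) (q * M m A' + r - j) : ℝ) : ℂ) * D m j x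
          = (∑ j ∈ Finset.Ico 1 (q * M m A' + 1),
              ((A (-α - 1) (q * M m A' + r - j) : ℝ) : ℂ) * D m j x)
            + ∑ j ∈ Finset.Ico (q * M m A' + 1) (q * M m A' + r + 1),
              ((A (-α - 1) (q * M m A' + r - j) : ℝ) : ℂ) * D m j x := by
      rw [← Finset.Ico_add_one_right_eq_Icc]
      exact (Finset.sum_Ico_consecutive _ (by omega) (by omega)).symm
    have hb1 :
        ∑ j ∈ Finset.Ico 1 (q * M m A' + 1),
            ((A (-α - 1) (q * M m A' + r - j) : ℝ) : ℂ) * D m j x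
          = (∑ i ∈ Finset.range (q * M m A'), ((A (-α - 1) (r + i) : ℝ) : ℂ)) *
              D m (q * M m A') x
            - psi m (q * M m A' - 1) x *
              ∑ i ∈ Finset.range (q * M m A'),
                ((A (-α - 1) (r + i) : ℝ) : ℂ) * (starRingEnd ℂ) (D m i x) := by
      simp only [Finset.sum_Ico_eq_sum_range]
      have he : q * M m A' + 1 - 1 = q * M m A' := by omega
      rw [he]
      rw [← Finset.sum_range_reflect
        (fun i => ((A (-α - 1) (q * M m A' + r - (1 + i)) : ℝ) : ℂ) * D m (1 + i) x)]
      rw [Finset.sum_mul, Finset.mul_sum, ← Finset.sum_sub_distrib]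
      refine Finset.sum_congr rfl fun i hi => ?_
      have hi' : i < q * M m A' := Finset.mem_range.1 hi
      have e1 : 1 + (q * M m A' - 1 - i) = q * M m A' - i := by omega
      have e2 : q * M m A' + r - (q * M m A' - i) = r + i := by omega
      rw [e1, e2, D_reflect hm hq1 hq (by omega : i ≤ q * M m A') x]
      ring
    have hb2 :
        ∑ j ∈ Finset.Ico (q * M m A' + 1) (q * M m A' + r + 1),
            ((A (-α - 1) (q * M m A' + r - j) : ℝ) : ℂ) * D m j x
          = (∑ i ∈ Finset.range r, ((A (-α - 1) i : ℝ) : ℂ)) * D m (q * M m A') x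
            + psi m (q * M m A') x *
              ∑ j ∈ Finset.Icc 1 r, ((A (-α - 1) (r - j) : ℝ) : ℂ) * D m j x := by
      have hstep1 :
          ∑ j ∈ Finset.Ico (q * M m A' + 1) (q * M m A' + r + 1),
              ((A (-α - 1) (q * M m A' + r - j) : ℝ) : ℂ) * D m j x
            = ∑ i ∈ Finset.range r,
                ((A (-α - 1) (r - 1 - i) : ℝ) : ℂ) *
                  (D m (q * M m A') x + psi m (q * M m A') x * D m (1 + i) x) := by
        simp only [Finset.sum_Ico_eq_sum_range]
        have he : q * M m A' + r + 1 - (q * M m A' + 1) = r := by omega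
        rw [he]
        refine Finset.sum_congr rfl fun i hi => ?_
        have hi' : i < r := Finset.mem_range.1 hi
        have e1 : q * M m A' + r - (q * M m A' + 1 + i) = r - 1 - i := by omega
        have e2 : q * M m A' + 1 + i = q * M m A' + (1 + i) := by omega
        rw [e1, e2, D_add hm (by omega : 1 + i < M m A') q x]
      rw [hstep1]
      have hdist :
          ∑ i ∈ Finset.range r,
              ((A (-α - 1) (r - 1 - i) : ℝ) : ℂ) *
                (D m (q * M m A') x + psi m (q * M m A') x * D m (1 + i) x)
            = (∑ i ∈ Finset.range r, ((A (-α - 1) (r - 1 - i) : ℝ) : ℂ)) *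
                D m (q * M m A') x
              + psi m (q * M m A') x *
                ∑ i ∈ Finset.range r, ((A (-α - 1) (r - 1 - i) : ℝ) : ℂ) * D m (1 + i) x := by
        rw [Finset.sum_mul, Finset.mul_sum, ← Finset.sum_add_distrib]
        exact Finset.sum_congr rfl fun i _ => by ring
      rw [hdist]
      congr 1
      · congr 1
        exact Finset.sum_range_reflect (fun i => ((A (-α - 1) i : ℝ) : ℂ)) r
      · congr 1
        rw [← Finset.Ico_add_one_right_eq_Icc]
        simp only [Finset.sum_Ico_eq_sum_range]
        have he : r + 1 - 1 = r := by omega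
        rw [he]
        refine Finset.sum_congr rfl fun i hi => ?_
        have e : r - (1 + i) = r - 1 - i := by omega
        rw [e]
    have hcoefR :
        (∑ i ∈ Finset.range (q * M m A'), A (-α - 1) (r + i))
            + ∑ i ∈ Finset.range r, A (-α - 1) i
          = A (-α) (q * M m A' + r - 1) := by
      have h1 : ∑ i ∈ Finset.range (q * M m A'), A (-α - 1) (r + i)
          = ∑ i ∈ Finset.Ico r (r + q * M m A'), A (-α - 1) i := by
        rw [Finset.sum_Ico_eq_sum_range]
        have he : r + q * M m A' - r = q * M m A' := by omega
        rw [he]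
      have h2 : ∑ i ∈ Finset.range r, A (-α - 1) i = ∑ i ∈ Finset.Ico 0 r, A (-α - 1) i := by
        rw [Finset.range_eq_Ico]
      rw [h1, h2, add_comm,
        Finset.sum_Ico_consecutive _ (Nat.zero_le r) (Nat.le_add_right r _),
        ← Finset.range_eq_Ico,
        show r + q * M m A' = q * M m A' + r - 1 + 1 from by omega, A_sum]
    have hcoefC :
        (∑ i ∈ Finset.range (q * M m A'), ((A (-α - 1) (r + i) : ℝ) : ℂ))
            + ∑ i ∈ Finset.range r, ((A (-α - 1) i : ℝ) : ℂ)
          = ((A (-α) (q * M m A' + r - 1) : ℝ) : ℂ) := by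
      exact_mod_cast congrArg (fun y : ℝ => (y : ℂ)) hcoefR
    rw [hsplit, hb1, hb2, ← hcoefC]
    ring

end CoreLemma
section MainAux

variable {m : ℕ → ℕ}

lemma main_aux (hm : ∀ k, 2 ≤ m k) (α : ℝ) (x : G m) :
    ∀ A' : ℕ, ∀ n : ℕ, n < M m (A' + 1) →
    ∑ j ∈ Finset.Icc 1 n, ((A (-α - 1) (n - j) : ℝ) : ℂ) * D m j x =
      ∑ k ∈ Finset.range (A' + 1),
        (∏ l ∈ Finset.Icc (k + 1) A', psi m (dig m n l * M m l) x) *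
          D m (dig m n k * M m k) x * ((A (-α) (npart m n (k + 1) - 1) : ℝ) : ℂ)
      - ∑ k ∈ Finset.range (A' + 1),
        (∏ l ∈ Finset.Icc (k + 1) A', psi m (dig m n l * M m l) x) *
          psi m (dig m n k * M m k - 1) x *
          ∑ j ∈ Finset.range (dig m n k * M m k),
            ((A (-α - 1) (npart m n k + j) : ℝ) : ℂ) * (starRingEnd ℂ) (D m j x) := by
  intro A'
  induction A' with
  | zero =>
    intro n hn
    have hM1 : M m 1 = m 0 := by
      show m 0 * M m 0 = m 0
      show m 0 * 1 = m 0
      rw [mul_one]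
    have hn0 : n < m 0 := by rw [← hM1]; exact hn
    have hdig0 : dig m n 0 = n := by
      show n / M m 0 % m 0 = n
      show n / 1 % m 0 = n
      rw [Nat.div_one, Nat.mod_eq_of_lt hn0]
    have hM0 : M m 0 = 1 := rfl
    have hnp0 : npart m n 0 = 0 := rfl
    have hnp1 : npart m n 1 = n := by
      rw [npart_eq_mod hm, hM1, Nat.mod_eq_of_lt hn0]
    have hcore := core hm α (A' := 0) (q := n) (r := 0) (le_of_lt hn0) (by rw [hM0]; omega) x
    rw [hM0, mul_one, add_zero] at hcore
    rw [hcore]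
    rw [Finset.sum_range_one, Finset.sum_range_one, hdig0, hM0, mul_one, hnp0, hnp1]
    have hIcc : Finset.Icc 1 0 = (∅ : Finset ℕ) := by
      apply Finset.Icc_eq_empty; omega
    rw [hIcc, Finset.prod_empty]
    simp only [zero_add, one_mul]
    rw [Finset.sum_empty, mul_zero, add_zero]
  | succ A' ih =>
    intro n hn
    have hM := M_pos hm (A' + 1)
    have hqlt : n / M m (A' + 1) < m (A' + 1) := by
      rw [Nat.div_lt_iff_lt_mul hM]
      exact hn
    have hdigtop : dig m n (A' + 1) = n / M m (A' + 1) := by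
      show n / M m (A' + 1) % m (A' + 1) = n / M m (A' + 1)
      exact Nat.mod_eq_of_lt hqlt
    have hq : dig m n (A' + 1) ≤ m (A' + 1) := by rw [hdigtop]; omega
    have hr : npart m n (A' + 1) < M m (A' + 1) := by
      rw [npart_eq_mod hm]
      exact Nat.mod_lt _ hM
    have hn' : dig m n (A' + 1) * M m (A' + 1) + npart m n (A' + 1) = n := by
      rw [hdigtop, npart_eq_mod hm, mul_comm]
      exact Nat.div_add_mod n _
    have hdig : ∀ l ≤ A', dig m n l = dig m (npart m n (A' + 1)) l := by
      intro l hl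
      conv_lhs => rw [← hn']
      exact dig_low hm (by omega) _ _
    have hnpart : ∀ k ≤ A' + 1, npart m n k = npart m (npart m n (A' + 1)) k := by
      intro k hk
      rw [npart_eq_mod hm, npart_eq_mod hm, npart_eq_mod hm,
        Nat.mod_mod_of_dvd n (M_dvd hk)]
    have hnparttop : npart m n (A' + 2) = n := by
      rw [npart_eq_mod hm, Nat.mod_eq_of_lt hn]
    have hcore := core hm α (A' := A' + 1) hq hr x
    rw [hn'] at hcore
    have hIH := ih (npart m n (A' + 1)) hr
    rw [hcore, hIH]
    -- expand top terms of the two sums on the RHS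
    rw [Finset.sum_range_succ
        (fun k => (∏ l ∈ Finset.Icc (k + 1) (A' + 1), psi m (dig m n l * M m l) x) *
          D m (dig m n k * M m k) x * ((A (-α) (npart m n (k + 1) - 1) : ℝ) : ℂ)),
      Finset.sum_range_succ
        (fun k => (∏ l ∈ Finset.Icc (k + 1) (A' + 1), psi m (dig m n l * M m l) x) *
          psi m (dig m n k * M m k - 1) x *
          ∑ j ∈ Finset.range (dig m n k * M m k),
            ((A (-α - 1) (npart m n k + j) : ℝ) : ℂ) * (starRingEnd ℂ) (D m j x))]
    have hIccE : Finset.Icc (A' + 1 + 1) (A' + 1) = (∅ : Finset ℕ) := by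
      apply Finset.Icc_eq_empty; omega
    rw [hIccE, Finset.prod_empty, hnparttop]
    have hS1 : ∑ k ∈ Finset.range (A' + 1),
        (∏ l ∈ Finset.Icc (k + 1) (A' + 1), psi m (dig m n l * M m l) x) *
          D m (dig m n k * M m k) x * ((A (-α) (npart m n (k + 1) - 1) : ℝ) : ℂ)
        = psi m (dig m n (A' + 1) * M m (A' + 1)) x *
          ∑ k ∈ Finset.range (A' + 1),
            (∏ l ∈ Finset.Icc (k + 1) A',
                psi m (dig m (npart m n (A' + 1)) l * M m l) x) *
              D m (dig m (npart m n (A' + 1)) k * M m k) x *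
              ((A (-α) (npart m (npart m n (A' + 1)) (k + 1) - 1) : ℝ) : ℂ) := by
      rw [Finset.mul_sum]
      refine Finset.sum_congr rfl fun k hk => ?_
      have hk' : k < A' + 1 := Finset.mem_range.1 hk
      rw [Finset.prod_Icc_succ_top (by omega : k + 1 ≤ A' + 1)]
      have hprod : ∏ l ∈ Finset.Icc (k + 1) A', psi m (dig m n l * M m l) x
          = ∏ l ∈ Finset.Icc (k + 1) A', psi m (dig m (npart m n (A' + 1)) l * M m l) x := by
        refine Finset.prod_congr rfl fun l hl => ?_
        have hl' : l ≤ A' := (Finset.mem_Icc.1 hl).2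
        rw [hdig l hl']
      rw [hprod, hdig k (by omega), hnpart (k + 1) (by omega)]
      ring
    have hS2 : ∑ k ∈ Finset.range (A' + 1),
        (∏ l ∈ Finset.Icc (k + 1) (A' + 1), psi m (dig m n l * M m l) x) *
          psi m (dig m n k * M m k - 1) x *
          ∑ j ∈ Finset.range (dig m n k * M m k),
            ((A (-α - 1) (npart m n k + j) : ℝ) : ℂ) * (starRingEnd ℂ) (D m j x)
        = psi m (dig m n (A' + 1) * M m (A' + 1)) x *
          ∑ k ∈ Finset.range (A' + 1),
            (∏ l ∈ Finset.Icc (k + 1) A',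
                psi m (dig m (npart m n (A' + 1)) l * M m l) x) *
              psi m (dig m (npart m n (A' + 1)) k * M m k - 1) x *
              ∑ j ∈ Finset.range (dig m (npart m n (A' + 1)) k * M m k),
                ((A (-α - 1) (npart m (npart m n (A' + 1)) k + j) : ℝ) : ℂ) *
                  (starRingEnd ℂ) (D m j x) := by
      rw [Finset.mul_sum]
      refine Finset.sum_congr rfl fun k hk => ?_
      have hk' : k < A' + 1 := Finset.mem_range.1 hk
      rw [Finset.prod_Icc_succ_top (by omega : k + 1 ≤ A' + 1)]
      have hprod : ∏ l ∈ Finset.Icc (k + 1) A', psi m (dig m n l * M m l) x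
          = ∏ l ∈ Finset.Icc (k + 1) A', psi m (dig m (npart m n (A' + 1)) l * M m l) x := by
        refine Finset.prod_congr rfl fun l hl => ?_
        have hl' : l ≤ A' := (Finset.mem_Icc.1 hl).2
        rw [hdig l hl']
      rw [hprod, hdig k (by omega), hnpart k (by omega)]
      ring
    rw [hS1, hS2]
    ring

end MainAux
/-- Lemma 1: expansion of `∑_{j=1}^{n} A_{n−j}^{−α−1} D_j(x)` for `M_A ≤ n < M_{A+1}`. -/
theorem lemma1 (m : ℕ → ℕ) (hm : ∀ k, 2 ≤ m k) (hb : ∃ B, ∀ k, m k ≤ B)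
    (α : ℝ) (hα0 : 0 < α) (hα1 : α < 1)
    (A' n : ℕ) (h1 : M m A' ≤ n) (h2 : n < M m (A' + 1)) (x : G m) :
    ∑ j ∈ Finset.Icc 1 n, ((A (-α - 1) (n - j) : ℝ) : ℂ) * D m j x =
      ∑ k ∈ Finset.range (A' + 1),
        (∏ l ∈ Finset.Icc (k + 1) A', psi m (dig m n l * M m l) x) *
          D m (dig m n k * M m k) x * ((A (-α) (npart m n (k + 1) - 1) : ℝ) : ℂ)
      - ∑ k ∈ Finset.range (A' + 1),
        (∏ l ∈ Finset.Icc (k + 1) A', psi m (dig m n l * M m l) x) *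
          psi m (dig m n k * M m k - 1) x *
          ∑ j ∈ Finset.range (dig m n k * M m k),
            ((A (-α - 1) (npart m n k + j) : ℝ) : ℂ) * (starRingEnd ℂ) (D m j x) :=
  main_aux hm α x A' n h2


end Vilenkin
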